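/- arXiv:1702.03849 — 4 statements merged into one kernel-verified Lean document; each statement's English description precedes it below -/
import Mathlib

section
/- Let f : ℝ^d → ℝ be C¹, nonnegative, and (m,b)-dissipative, i.e., ⟨w, ∇f(w)⟩ ≥ m‖w‖² - b for all w ∈ ℝ^d with m > 0, b ≥ 0. Then for all w ∈ ℝ^d, f(w) ≥ (m/3)‖w‖² - (b/2)·log 3. -/
open Real

theorem f_quadratic_lower_bound
    {d : ℕ} (f : EuclideanSpace ℝ (Fin d) → ℝ) (m b : ℝ)
    (hm : 0 < m) (hb : 0 ≤ b)
    (hf : ContDiff ℝ 1 f)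
    (hnonneg : ∀ w, 0 ≤ f w)
    (hdissip : ∀ w : EuclideanSpace ℝ (Fin d),
      (inner ℝ w (gradient f w) : ℝ) ≥ m * ‖w‖ ^ 2 - b) :
    ∀ w : EuclideanSpace ℝ (Fin d),
      f w ≥ m / 3 * ‖w‖ ^ 2 - b / 2 * Real.log 3 := by
  intro w
  have hdf : Differentiable ℝ f := hf.differentiable one_ne_zero
  set c : ℝ := m * ‖w‖ ^ 2 with hc
  -- derivative of t ↦ f (t • w)
  have key : ∀ t : ℝ, HasDerivAt (fun t : ℝ => f (t • w))
      ((inner ℝ (gradient f (t • w)) w : ℝ)) t := by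
    intro t
    have h1 : HasDerivAt (fun t : ℝ => t • w) w t := by
      simpa using (hasDerivAt_id t).smul_const w
    have h2 := (hdf (t • w)).hasGradientAt.hasFDerivAt.comp_hasDerivAt t h1
    simpa [Function.comp_def] using h2
  set t0 : ℝ := (Real.sqrt 3)⁻¹ with ht0def
  have h3 : (0:ℝ) < Real.sqrt 3 := Real.sqrt_pos.2 (by norm_num)
  have ht0 : 0 < t0 := inv_pos.2 h3
  have ht01 : t0 ≤ 1 := by
    rw [ht0def, inv_le_one_iff₀]
    right
    have : (1:ℝ) = Real.sqrt 1 := by simp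
    rw [this]
    exact Real.sqrt_le_sqrt (by norm_num)
  have ht0sq : t0 ^ 2 = 1 / 3 := by
    rw [ht0def, inv_pow, Real.sq_sqrt (by norm_num : (3:ℝ) ≥ 0)]
    norm_num
  have hlogt0 : Real.log t0 = -(Real.log 3 / 2) := by
    rw [ht0def, Real.log_inv, Real.log_sqrt (by norm_num)]
  set φ : ℝ → ℝ := fun t => f (t • w) - c * t ^ 2 / 2 + b * Real.log t with hφdef
  have hφderiv : ∀ t : ℝ, 0 < t → HasDerivAt φ
      ((inner ℝ (gradient f (t • w)) w : ℝ) - c * t + b / t) t := by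
    intro t ht
    have h1 := key t
    have h2 : HasDerivAt (fun t : ℝ => c * t ^ 2 / 2) (c * t) t := by
      have := ((hasDerivAt_pow 2 t).const_mul c).div_const 2
      simpa [mul_comm, mul_assoc, mul_div_assoc] using this
    have h3 : HasDerivAt (fun t : ℝ => b * Real.log t) (b * t⁻¹) t :=
      (Real.hasDerivAt_log (ne_of_gt ht)).const_mul b
    have := (h1.sub h2).add h3
    exact this.congr_deriv (by simp [div_eq_mul_inv])
  have hderiv_nonneg : ∀ t : ℝ, 0 < t →
      0 ≤ (inner ℝ (gradient f (t • w)) w : ℝ) - c * t + b / t := by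
    intro t ht
    have hd := hdissip (t • w)
    have hn : ‖t • w‖ ^ 2 = t ^ 2 * ‖w‖ ^ 2 := by
      rw [norm_smul]
      simp [mul_pow, sq_abs]
    have hin : (inner ℝ (t • w) (gradient f (t • w)) : ℝ)
        = t * (inner ℝ w (gradient f (t • w)) : ℝ) := real_inner_smul_left _ _ _
    rw [hn, hin] at hd
    have hd' : t * (inner ℝ w (gradient f (t • w)) : ℝ) ≥ c * t ^ 2 - b := by
      rw [hc]; nlinarith [hd]
    have hcomm : (inner ℝ (gradient f (t • w)) w : ℝ)
        = (inner ℝ w (gradient f (t • w)) : ℝ) := real_inner_comm _ _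
    rw [hcomm]
    have hbt : t * (b / t) = b := by field_simp
    nlinarith [hd', hbt, ht]
  have hmono : MonotoneOn φ (Set.Icc t0 1) := by
    apply monotoneOn_of_deriv_nonneg (convex_Icc t0 1)
    · apply ContinuousOn.add
      · apply ContinuousOn.sub
        · exact (hdf.continuous.comp (continuous_id.smul continuous_const)).continuousOn
        · exact (continuous_const.mul (continuous_pow 2)).continuousOn.div_const 2
      · exact continuousOn_const.mul (Real.continuousOn_log.mono (by
          intro x hx
          have : 0 < x := lt_of_lt_of_le ht0 hx.1
          simp [ne_of_gt this]))
    · intro t ht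
      rw [interior_Icc] at ht
      exact ((hφderiv t (lt_trans ht0 ht.1)).differentiableAt).differentiableWithinAt
    · intro t ht
      rw [interior_Icc] at ht
      have htpos : 0 < t := lt_trans ht0 ht.1
      rw [(hφderiv t htpos).deriv]
      exact hderiv_nonneg t htpos
  have hle := hmono (Set.mem_Icc.2 ⟨le_refl t0, ht01⟩) (Set.mem_Icc.2 ⟨ht01, le_refl 1⟩) ht01
  have hφ1 : φ 1 = f w - c / 2 := by
    simp [hφdef]
  have hφt0 : φ t0 = f (t0 • w) - c / 6 - b * (Real.log 3 / 2) := by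
    rw [hφdef]
    simp only
    rw [ht0sq, hlogt0]
    ring
  rw [hφ1, hφt0] at hle
  have hfnn := hnonneg (t0 • w)
  have hwnn : (0:ℝ) ≤ ‖w‖ ^ 2 := sq_nonneg _
  rw [hc] at *
  nlinarith [hle, hfnn]
end

section
/- Let μ and ν be Borel probability measures on ℝ^d with finite second moments, and let g : ℝ^d → ℝ be C¹ with ‖∇g(w)‖ ≤ c₁‖w‖ + c₂ for all w, where c₁ > 0, c₂ ≥ 0. Set σ² = max(∫‖w‖² dμ(w), ∫‖w‖² dν(w)). Then |∫g dμ - ∫g dν| ≤ (c₁σ + c₂)·W₂(μ, ν), where W₂ is the Euclidean 2-Wasserstein distance. -/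
open Real MeasureTheory

variable {E : Type*} [NormedAddCommGroup E] [InnerProductSpace ℝ E] [CompleteSpace E]

lemma grad_norm (g : E → ℝ) (x : E) : ‖gradient g x‖ = ‖fderiv ℝ g x‖ := by
  show ‖(InnerProductSpace.toDual ℝ E).symm (fderiv ℝ g x)‖ = _
  exact LinearIsometryEquiv.norm_map _ _

lemma ptwise (g : E → ℝ) (c₁ c₂ : ℝ) (hc₁ : 0 ≤ c₁) (hg : ContDiff ℝ 1 g)
    (hgrow : ∀ w, ‖gradient g w‖ ≤ c₁ * ‖w‖ + c₂) (v w : E) :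
    |g v - g w| ≤ (c₁ * ((‖v‖ + ‖w‖) / 2) + c₂) * ‖v - w‖ := by
  have hgd : Differentiable ℝ g := hg.differentiable one_ne_zero
  set L : ℝ → E := fun t => w + t • (v - w) with hL
  have hLc : Continuous L := by continuity
  have hderiv : ∀ t ∈ Set.uIcc (0:ℝ) 1,
      HasDerivAt (fun t => g (L t)) (fderiv ℝ g (L t) (v - w)) t := by
    intro t _
    have h1 : HasDerivAt L (v - w) t := by
      simpa [hL] using ((hasDerivAt_id t).smul_const (v - w)).const_add w
    exact (hgd (L t)).hasFDerivAt.comp_hasDerivAt t h1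
  have hcont : Continuous fun t => fderiv ℝ g (L t) (v - w) :=
    ((hg.continuous_fderiv one_ne_zero).comp hLc).clm_apply continuous_const
  have hint : IntervalIntegrable (fun t => fderiv ℝ g (L t) (v - w)) volume 0 1 :=
    hcont.intervalIntegrable 0 1
  have heq : ∫ t in (0:ℝ)..1, fderiv ℝ g (L t) (v - w) = g (L 1) - g (L 0) :=
    intervalIntegral.integral_eq_sub_of_hasDerivAt hderiv hint
  have hL1 : L 1 = v := by simp [hL]
  have hL0 : L 0 = w := by simp [hL]
  rw [hL1, hL0] at heq
  rw [← heq]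
  have hbound : ∀ t ∈ Set.Icc (0:ℝ) 1,
      |fderiv ℝ g (L t) (v - w)| ≤ ((c₁ * ‖w‖ + c₂) + t * (c₁ * (‖v‖ - ‖w‖))) * ‖v - w‖ := by
    intro t ht
    have h1 : |fderiv ℝ g (L t) (v - w)| ≤ ‖fderiv ℝ g (L t)‖ * ‖v - w‖ :=
      (fderiv ℝ g (L t)).le_opNorm (v - w)
    have h2 : ‖L t‖ ≤ (1 - t) * ‖w‖ + t * ‖v‖ := by
      have : L t = (1 - t) • w + t • v := by
        rw [hL]; simp [smul_sub, sub_smul]; abel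
      rw [this]
      calc ‖(1 - t) • w + t • v‖ ≤ ‖(1 - t) • w‖ + ‖t • v‖ := norm_add_le _ _
        _ = (1 - t) * ‖w‖ + t * ‖v‖ := by
            rw [norm_smul, norm_smul, Real.norm_of_nonneg (by linarith [ht.2]),
              Real.norm_of_nonneg ht.1]
    have h3 : ‖fderiv ℝ g (L t)‖ ≤ c₁ * ((1 - t) * ‖w‖ + t * ‖v‖) + c₂ := by
      have := hgrow (L t)
      rw [grad_norm] at this
      refine this.trans ?_
      have := mul_le_mul_of_nonneg_left h2 hc₁
      linarith
    calc |fderiv ℝ g (L t) (v - w)| ≤ ‖fderiv ℝ g (L t)‖ * ‖v - w‖ := h1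
      _ ≤ (c₁ * ((1 - t) * ‖w‖ + t * ‖v‖) + c₂) * ‖v - w‖ := by
          apply mul_le_mul_of_nonneg_right h3 (norm_nonneg _)
      _ = ((c₁ * ‖w‖ + c₂) + t * (c₁ * (‖v‖ - ‖w‖))) * ‖v - w‖ := by ring
  set A := c₁ * ‖w‖ + c₂ with hA
  set B := c₁ * (‖v‖ - ‖w‖) with hB
  set C := ‖v - w‖ with hC
  have hBint : IntervalIntegrable (fun t => (A + t * B) * C) volume 0 1 := by
    apply Continuous.intervalIntegrable; continuity
  have hb' : ∀ᵐ t ∂(volume.restrict (Set.uIoc (0:ℝ) 1)),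
      ‖fderiv ℝ g (L t) (v - w)‖ ≤ (A + t * B) * C := by
    filter_upwards [MeasureTheory.ae_restrict_mem measurableSet_uIoc] with t ht
    have ht' : t ∈ Set.Icc (0:ℝ) 1 := Set.Ioc_subset_Icc_self (by
      simpa [Set.uIoc_of_le (zero_le_one' ℝ)] using ht)
    simpa [Real.norm_eq_abs] using hbound t ht'
  have hInonneg : (0:ℝ) ≤ ∫ t in (0:ℝ)..1, (A + t * B) * C := by
    apply intervalIntegral.integral_nonneg zero_le_one
    intro t ht
    exact le_trans (abs_nonneg _) (hbound t ht)
  have habs : |∫ t in (0:ℝ)..1, fderiv ℝ g (L t) (v - w)|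
      ≤ ∫ t in (0:ℝ)..1, (A + t * B) * C := by
    rw [← Real.norm_eq_abs]
    have := intervalIntegral.norm_integral_le_of_norm_le zero_le_one
      (by rwa [Set.uIoc_of_le zero_le_one, ae_restrict_iff' measurableSet_Ioc] at hb') hBint
    exact this
  refine habs.trans ?_
  have hval : ∫ t in (0:ℝ)..1, (A + t * B) * C = (A + B / 2) * C := by
    have : (fun t : ℝ => (A + t * B) * C) = fun t => A * C + t * (B * C) := by
      funext t; ring
    rw [this, intervalIntegral.integral_add intervalIntegrable_const
      ((intervalIntegral.intervalIntegrable_id).mul_const _),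
      intervalIntegral.integral_const, intervalIntegral.integral_mul_const,
      integral_id]
    simp; ring
  rw [hval]
  have : A + B / 2 = c₁ * ((‖v‖ + ‖w‖) / 2) + c₂ := by rw [hA, hB]; ring
  rw [this]

lemma holder2 {α : Type*} [MeasurableSpace α] {γ : Measure α} {F G : α → ℝ}
    (hFnn : ∀ x, 0 ≤ F x) (hGnn : ∀ x, 0 ≤ G x)
    (hFm : AEStronglyMeasurable F γ) (hGm : AEStronglyMeasurable G γ)
    (hF2 : Integrable (fun x => F x ^ 2) γ) (hG2 : Integrable (fun x => G x ^ 2) γ) :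
    ∫ x, F x * G x ∂γ ≤ Real.sqrt (∫ x, F x ^ 2 ∂γ) * Real.sqrt (∫ x, G x ^ 2 ∂γ) := by
  have hpq : (2:ℝ).HolderConjugate 2 := Real.HolderConjugate.two_two
  have hFL : MemLp F (ENNReal.ofReal (2:ℝ)) γ := by
    rw [show ENNReal.ofReal (2:ℝ) = 2 by norm_num [ENNReal.ofReal_ofNat]]
    exact (memLp_two_iff_integrable_sq hFm).2 hF2
  have hGL : MemLp G (ENNReal.ofReal (2:ℝ)) γ := by
    rw [show ENNReal.ofReal (2:ℝ) = 2 by norm_num [ENNReal.ofReal_ofNat]]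
    exact (memLp_two_iff_integrable_sq hGm).2 hG2
  have := MeasureTheory.integral_mul_le_Lp_mul_Lq_of_nonneg hpq
    (Filter.Eventually.of_forall hFnn) (Filter.Eventually.of_forall hGnn) hFL hGL
  simp_rw [Real.rpow_two] at this
  rw [Real.sqrt_eq_rpow, Real.sqrt_eq_rpow]
  exact this

lemma coupling_bound
    {d : ℕ} (μ ν : Measure (EuclideanSpace ℝ (Fin d)))
    [IsProbabilityMeasure μ] [IsProbabilityMeasure ν]
    (hμ2 : Integrable (fun w => ‖w‖ ^ 2) μ)
    (hν2 : Integrable (fun w => ‖w‖ ^ 2) ν)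
    (g : EuclideanSpace ℝ (Fin d) → ℝ) (c₁ c₂ σ : ℝ)
    (hc₁ : 0 ≤ c₁) (hc₂ : 0 ≤ c₂)
    (hg : ContDiff ℝ 1 g)
    (hgrow : ∀ w, ‖gradient g w‖ ≤ c₁ * ‖w‖ + c₂)
    (hσ : σ ^ 2 = max (∫ w, ‖w‖ ^ 2 ∂μ) (∫ w, ‖w‖ ^ 2 ∂ν))
    (hσ0 : 0 ≤ σ)
    (γ : Measure (EuclideanSpace ℝ (Fin d) × EuclideanSpace ℝ (Fin d)))
    (hγ : IsProbabilityMeasure γ)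
    (hγ1 : γ.map Prod.fst = μ) (hγ2 : γ.map Prod.snd = ν) :
    |(∫ w, g w ∂μ) - ∫ w, g w ∂ν|
      ≤ (c₁ * σ + c₂) * Real.sqrt (∫ p, ‖p.1 - p.2‖ ^ 2 ∂γ) := by
  have hgc : Continuous g := hg.continuous
  -- integrability of g with respect to μ and ν
  have hgabs : ∀ w : EuclideanSpace ℝ (Fin d),
      |g w| ≤ |g 0| + ((c₁/2) * ‖w‖^2 + c₂ * ‖w‖) := by
    intro w
    have := ptwise g c₁ c₂ hc₁ hg hgrow w 0
    simp only [norm_zero, sub_zero, add_zero] at this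
    have h2 : |g w| - |g 0| ≤ |g w - g 0| := abs_sub_abs_le_abs_sub _ _
    nlinarith [this, h2]
  have hgint : ∀ (ρ : Measure (EuclideanSpace ℝ (Fin d))), IsProbabilityMeasure ρ →
      Integrable (fun w => ‖w‖ ^ 2) ρ → Integrable g ρ := by
    intro ρ hρ hρ2
    have hn : Integrable (fun w : EuclideanSpace ℝ (Fin d) => ‖w‖) ρ := by
      refine Integrable.mono' ((integrable_const 1).add hρ2)
        (continuous_norm.aestronglyMeasurable) (Filter.Eventually.of_forall fun w => ?_)
      rw [Real.norm_of_nonneg (norm_nonneg _)]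
      simp only [Pi.add_apply]
      rcases le_or_gt ‖w‖ 1 with h | h
      · nlinarith [sq_nonneg ‖w‖]
      · nlinarith
    refine Integrable.mono'
      ((integrable_const (|g 0|)).add ((hρ2.const_mul (c₁/2)).add (hn.const_mul c₂)))
      hgc.aestronglyMeasurable (Filter.Eventually.of_forall fun w => ?_)
    rw [Real.norm_eq_abs]
    simp only [Pi.add_apply]
    have := hgabs w
    linarith
  have hgμ : Integrable g μ := hgint μ ‹_› hμ2
  have hgν : Integrable g ν := hgint ν ‹_› hν2
  -- transfer to γ
  have hfst : AEMeasurable (Prod.fst :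
      EuclideanSpace ℝ (Fin d) × EuclideanSpace ℝ (Fin d) → _) γ :=
    measurable_fst.aemeasurable
  have hsnd : AEMeasurable (Prod.snd :
      EuclideanSpace ℝ (Fin d) × EuclideanSpace ℝ (Fin d) → _) γ :=
    measurable_snd.aemeasurable
  have hμint : ∀ f : EuclideanSpace ℝ (Fin d) → ℝ, Integrable f μ →
      Integrable (fun p : EuclideanSpace ℝ (Fin d) × EuclideanSpace ℝ (Fin d) => f p.1) γ := by
    intro f hf
    have := (integrable_map_measure (hγ1 ▸ hf.aestronglyMeasurable) hfst).mp (hγ1 ▸ hf)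
    exact this
  have hνint : ∀ f : EuclideanSpace ℝ (Fin d) → ℝ, Integrable f ν →
      Integrable (fun p : EuclideanSpace ℝ (Fin d) × EuclideanSpace ℝ (Fin d) => f p.2) γ := by
    intro f hf
    exact (integrable_map_measure (hγ2 ▸ hf.aestronglyMeasurable) hsnd).mp (hγ2 ▸ hf)
  have hμeq : ∀ f : EuclideanSpace ℝ (Fin d) → ℝ, AEStronglyMeasurable f μ →
      ∫ w, f w ∂μ = ∫ p, f p.1 ∂γ := by
    intro f hf
    rw [← hγ1, integral_map hfst (hγ1 ▸ hf)]
  have hνeq : ∀ f : EuclideanSpace ℝ (Fin d) → ℝ, AEStronglyMeasurable f ν →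
      ∫ w, f w ∂ν = ∫ p, f p.2 ∂γ := by
    intro f hf
    rw [← hγ2, integral_map hsnd (hγ2 ▸ hf)]
    -- components on γ
  have hn1sq : Integrable (fun p : EuclideanSpace ℝ (Fin d) × EuclideanSpace ℝ (Fin d) =>
      ‖p.1‖ ^ 2) γ := hμint _ hμ2
  have hn2sq : Integrable (fun p : EuclideanSpace ℝ (Fin d) × EuclideanSpace ℝ (Fin d) =>
      ‖p.2‖ ^ 2) γ := hνint _ hν2
  have hnormint : ∀ (ρ : Measure (EuclideanSpace ℝ (Fin d))),
      Integrable (fun w => ‖w‖ ^ 2) ρ → IsProbabilityMeasure ρ →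
      Integrable (fun w : EuclideanSpace ℝ (Fin d) => ‖w‖) ρ := by
    intro ρ hρ2 hρ
    refine Integrable.mono' ((integrable_const 1).add hρ2)
      (continuous_norm.aestronglyMeasurable) (Filter.Eventually.of_forall fun w => ?_)
    rw [Real.norm_of_nonneg (norm_nonneg _)]
    simp only [Pi.add_apply]
    rcases le_or_gt ‖w‖ 1 with h | h
    · nlinarith [sq_nonneg ‖w‖]
    · nlinarith
  have hn1 : Integrable (fun p : EuclideanSpace ℝ (Fin d) × EuclideanSpace ℝ (Fin d) =>
      ‖p.1‖) γ := hμint _ (hnormint μ hμ2 ‹_›)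
  have hn2 : Integrable (fun p : EuclideanSpace ℝ (Fin d) × EuclideanSpace ℝ (Fin d) =>
      ‖p.2‖) γ := hνint _ (hnormint ν hν2 ‹_›)
  have hI1 : ∫ p, ‖p.1‖ ^ 2 ∂γ ≤ σ ^ 2 := by
    rw [← hμeq _ hμ2.aestronglyMeasurable, hσ]; exact le_max_left _ _
  have hI2 : ∫ p, ‖p.2‖ ^ 2 ∂γ ≤ σ ^ 2 := by
    rw [← hνeq _ hν2.aestronglyMeasurable, hσ]; exact le_max_right _ _
  set F : EuclideanSpace ℝ (Fin d) × EuclideanSpace ℝ (Fin d) → ℝ :=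
    fun p => c₁ * ((‖p.1‖ + ‖p.2‖) / 2) + c₂ with hF
  set G : EuclideanSpace ℝ (Fin d) × EuclideanSpace ℝ (Fin d) → ℝ :=
    fun p => ‖p.1 - p.2‖ with hG
  have hFc : Continuous F := by
    exact (continuous_const.mul
      ((continuous_fst.norm.add continuous_snd.norm).div_const 2)).add continuous_const
  have hGc : Continuous G := (continuous_fst.sub continuous_snd).norm
  have hFnn : ∀ p, 0 ≤ F p := fun p => by
    have : 0 ≤ (‖p.1‖ + ‖p.2‖) / 2 := by positivity
    simp only [hF]; nlinarith
  have hGnn : ∀ p, 0 ≤ G p := fun p => norm_nonneg _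
  have hF2int : Integrable (fun p => F p ^ 2) γ := by
    refine Integrable.mono' (((hn1sq.add hn2sq).const_mul (c₁ ^ 2)).add
      (integrable_const (2 * c₂ ^ 2))) (hFc.pow 2).aestronglyMeasurable
      (Filter.Eventually.of_forall fun p => ?_)
    rw [Real.norm_of_nonneg (sq_nonneg _)]
    simp only [Pi.add_apply, hF]
    nlinarith [sq_nonneg (‖p.1‖ - ‖p.2‖), sq_nonneg (c₁ * ((‖p.1‖ + ‖p.2‖) / 2) - c₂),
      norm_nonneg p.1, norm_nonneg p.2, sq_nonneg (‖p.1‖ + ‖p.2‖)]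
  have hG2int : Integrable (fun p => G p ^ 2) γ := by
    refine Integrable.mono' ((hn1sq.add hn2sq).const_mul 2)
      (hGc.pow 2).aestronglyMeasurable (Filter.Eventually.of_forall fun p => ?_)
    rw [Real.norm_of_nonneg (sq_nonneg _)]
    simp only [Pi.add_apply, hG]
    have h1 : ‖p.1 - p.2‖ ≤ ‖p.1‖ + ‖p.2‖ := norm_sub_le _ _
    nlinarith [sq_nonneg (‖p.1‖ - ‖p.2‖), norm_nonneg (p.1 - p.2)]
  have hFGint : Integrable (fun p => F p * G p) γ := by
    refine Integrable.mono' ((hF2int.add hG2int).div_const 2)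
      (hFc.mul hGc).aestronglyMeasurable (Filter.Eventually.of_forall fun p => ?_)
    rw [Real.norm_of_nonneg (mul_nonneg (hFnn p) (hGnn p))]
    clear_value F G
    show F p * G p ≤ (F p ^ 2 + G p ^ 2) / 2
    nlinarith [sq_nonneg (F p - G p)]
  -- step A
  have hgp1 : Integrable (fun p : EuclideanSpace ℝ (Fin d) × EuclideanSpace ℝ (Fin d) =>
      g p.1) γ := hμint g hgμ
  have hgp2 : Integrable (fun p : EuclideanSpace ℝ (Fin d) × EuclideanSpace ℝ (Fin d) =>
      g p.2) γ := hνint g hgν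
  have hdiff : (∫ w, g w ∂μ) - ∫ w, g w ∂ν = ∫ p, (g p.1 - g p.2) ∂γ := by
    rw [hμeq g hgμ.aestronglyMeasurable, hνeq g hgν.aestronglyMeasurable,
      integral_sub hgp1 hgp2]
  have habs : |∫ p, (g p.1 - g p.2) ∂γ| ≤ ∫ p, F p * G p ∂γ := by
    refine le_trans (norm_integral_le_integral_norm
      (fun p : EuclideanSpace ℝ (Fin d) × EuclideanSpace ℝ (Fin d) => g p.1 - g p.2)) ?_
    refine integral_mono (hgp1.sub hgp2).norm hFGint fun p => ?_
    rw [Real.norm_eq_abs]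
    exact ptwise g c₁ c₂ hc₁ hg hgrow p.1 p.2
  -- Hölder
  have hholder : ∫ p, F p * G p ∂γ
      ≤ Real.sqrt (∫ p, F p ^ 2 ∂γ) * Real.sqrt (∫ p, G p ^ 2 ∂γ) :=
    holder2 hFnn hGnn hFc.aestronglyMeasurable hGc.aestronglyMeasurable hF2int hG2int
  -- bound on sqrt (∫ F²)
  set h : EuclideanSpace ℝ (Fin d) × EuclideanSpace ℝ (Fin d) → ℝ :=
    fun p => (‖p.1‖ + ‖p.2‖) / 2 with hh
  have hhc : Continuous h := (continuous_fst.norm.add continuous_snd.norm).div_const 2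
  have hhnn : ∀ p, 0 ≤ h p := fun p => by positivity
  have hhint : Integrable h γ := (hn1.add hn2).div_const 2
  have hh2int : Integrable (fun p => h p ^ 2) γ := by
    refine Integrable.mono' ((hn1sq.add hn2sq).div_const 2)
      (hhc.pow 2).aestronglyMeasurable (Filter.Eventually.of_forall fun p => ?_)
    rw [Real.norm_of_nonneg (sq_nonneg _)]
    simp only [Pi.add_apply, hh]
    nlinarith [sq_nonneg (‖p.1‖ - ‖p.2‖)]
  have hh2le : ∫ p, h p ^ 2 ∂γ ≤ σ ^ 2 := by
    have step : ∫ p, h p ^ 2 ∂γ ≤ ∫ p, (‖p.1‖ ^ 2 + ‖p.2‖ ^ 2) / 2 ∂γ := by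
      refine integral_mono hh2int ((hn1sq.add hn2sq).div_const 2) fun p => ?_
      simp only [hh]
      nlinarith [sq_nonneg (‖p.1‖ - ‖p.2‖)]
    have : ∫ p, (‖p.1‖ ^ 2 + ‖p.2‖ ^ 2) / 2 ∂γ
        = ((∫ p, ‖p.1‖ ^ 2 ∂γ) + ∫ p, ‖p.2‖ ^ 2 ∂γ) / 2 := by
      rw [integral_div, integral_add hn1sq hn2sq]
    rw [this] at step
    linarith
  have hhle : ∫ p, h p ∂γ ≤ σ := by
    have h1 : ∫ p, h p ∂γ = ∫ p, h p * (fun _ => (1:ℝ)) p ∂γ := by simp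
    have h2 := holder2 hhnn (fun _ => zero_le_one) hhc.aestronglyMeasurable
      aestronglyMeasurable_const hh2int (by simpa using integrable_const (1:ℝ))
    have h3 : ∫ p, ((fun _ => (1:ℝ)) p) ^ 2 ∂γ = 1 := by simp
    rw [h3, Real.sqrt_one, mul_one] at h2
    rw [h1]
    refine h2.trans ?_
    calc Real.sqrt (∫ p, h p ^ 2 ∂γ) ≤ Real.sqrt (σ ^ 2) := Real.sqrt_le_sqrt hh2le
      _ = σ := by rw [Real.sqrt_sq hσ0]
  have hF2val : ∫ p, F p ^ 2 ∂γ
      = c₁ ^ 2 * (∫ p, h p ^ 2 ∂γ) + (2 * c₁ * c₂) * (∫ p, h p ∂γ) + c₂ ^ 2 := by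
    have : (fun p => F p ^ 2)
        = fun p => (c₁ ^ 2 * h p ^ 2 + (2 * c₁ * c₂) * h p) + c₂ ^ 2 := by
      funext p; simp only [hF, hh]; ring
    have hint1 : Integrable (fun p => c₁ ^ 2 * h p ^ 2 + 2 * c₁ * c₂ * h p) γ :=
      (hh2int.const_mul _).add (hhint.const_mul _)
    rw [this, integral_add hint1 (integrable_const _),
      integral_add (hh2int.const_mul _) (hhint.const_mul _),
      integral_const_mul, integral_const_mul, integral_const]
    simp [hγ.measure_univ]
  have hF2le : ∫ p, F p ^ 2 ∂γ ≤ (c₁ * σ + c₂) ^ 2 := by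
    rw [hF2val]
    have e1 : c₁ ^ 2 * (∫ p, h p ^ 2 ∂γ) ≤ c₁ ^ 2 * σ ^ 2 :=
      mul_le_mul_of_nonneg_left hh2le (sq_nonneg _)
    have e2 : (2 * c₁ * c₂) * (∫ p, h p ∂γ) ≤ (2 * c₁ * c₂) * σ :=
      mul_le_mul_of_nonneg_left hhle (by positivity)
    nlinarith
  have hsqF : Real.sqrt (∫ p, F p ^ 2 ∂γ) ≤ c₁ * σ + c₂ := by
    calc Real.sqrt (∫ p, F p ^ 2 ∂γ) ≤ Real.sqrt ((c₁ * σ + c₂) ^ 2) :=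
          Real.sqrt_le_sqrt hF2le
      _ = c₁ * σ + c₂ := Real.sqrt_sq (by positivity)
  -- combine
  rw [hdiff]
  calc |∫ p, (g p.1 - g p.2) ∂γ| ≤ ∫ p, F p * G p ∂γ := habs
    _ ≤ Real.sqrt (∫ p, F p ^ 2 ∂γ) * Real.sqrt (∫ p, G p ^ 2 ∂γ) := hholder
    _ ≤ (c₁ * σ + c₂) * Real.sqrt (∫ p, G p ^ 2 ∂γ) :=
        mul_le_mul_of_nonneg_right hsqF (Real.sqrt_nonneg _)
    _ = (c₁ * σ + c₂) * Real.sqrt (∫ p, ‖p.1 - p.2‖ ^ 2 ∂γ) := rfl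

/-- The Euclidean 2-Wasserstein distance between two probability measures on
`EuclideanSpace ℝ (Fin d)`: the infimum of `(E‖V - W‖²)^{1/2}` over all
couplings of `μ` and `ν`. -/
noncomputable def wasserstein2 {d : ℕ}
    (μ ν : Measure (EuclideanSpace ℝ (Fin d))) : ℝ :=
  sInf { r : ℝ | ∃ γ : Measure (EuclideanSpace ℝ (Fin d) × EuclideanSpace ℝ (Fin d)),
    IsProbabilityMeasure γ ∧ γ.map Prod.fst = μ ∧ γ.map Prod.snd = ν ∧
    r = (∫ p, ‖p.1 - p.2‖ ^ 2 ∂γ) ^ ((1 : ℝ) / 2) }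

theorem wasserstein_continuity_quadratic_growth
    {d : ℕ} (μ ν : Measure (EuclideanSpace ℝ (Fin d)))
    [IsProbabilityMeasure μ] [IsProbabilityMeasure ν]
    (hμ2 : Integrable (fun w => ‖w‖ ^ 2) μ)
    (hν2 : Integrable (fun w => ‖w‖ ^ 2) ν)
    (g : EuclideanSpace ℝ (Fin d) → ℝ) (c₁ c₂ σ : ℝ)
    (hc₁ : 0 < c₁) (hc₂ : 0 ≤ c₂)
    (hg : ContDiff ℝ 1 g)
    (hgrow : ∀ w, ‖gradient g w‖ ≤ c₁ * ‖w‖ + c₂)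
    (hσ : σ ^ 2 = max (∫ w, ‖w‖ ^ 2 ∂μ) (∫ w, ‖w‖ ^ 2 ∂ν))
    (hσ0 : 0 ≤ σ) :
    |(∫ w, g w ∂μ) - ∫ w, g w ∂ν| ≤ (c₁ * σ + c₂) * wasserstein2 μ ν := by
  set S := { r : ℝ | ∃ γ : Measure (EuclideanSpace ℝ (Fin d) × EuclideanSpace ℝ (Fin d)),
    IsProbabilityMeasure γ ∧ γ.map Prod.fst = μ ∧ γ.map Prod.snd = ν ∧
    r = (∫ p, ‖p.1 - p.2‖ ^ 2 ∂γ) ^ ((1 : ℝ) / 2) } with hS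
  have hW : wasserstein2 μ ν = sInf S := rfl
  have hne : S.Nonempty := by
    refine ⟨(∫ p, ‖p.1 - p.2‖ ^ 2 ∂(μ.prod ν)) ^ ((1 : ℝ) / 2), μ.prod ν, inferInstance,
      ?_, ?_, rfl⟩
    · exact Measure.fst_prod
    · exact Measure.snd_prod
  have key : ∀ r ∈ S, |(∫ w, g w ∂μ) - ∫ w, g w ∂ν| ≤ (c₁ * σ + c₂) * r := by
    rintro r ⟨γ, hγ, hγ1, hγ2, rfl⟩
    rw [← Real.sqrt_eq_rpow]
    exact coupling_bound μ ν hμ2 hν2 g c₁ c₂ σ hc₁.le hc₂ hg hgrow hσ hσ0 γ hγ hγ1 hγ2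
  have hrnn : ∀ r ∈ S, 0 ≤ r := by
    rintro r ⟨γ, hγ, hγ1, hγ2, rfl⟩
    exact Real.rpow_nonneg (integral_nonneg fun p => by positivity) _
  rcases eq_or_lt_of_le (show (0:ℝ) ≤ c₁ * σ + c₂ by positivity) with hc | hc
  · obtain ⟨r, hr⟩ := hne
    have h1 := key r hr
    rw [← hc, zero_mul] at h1
    rw [← hc, zero_mul]
    exact h1
  · have h1 : |(∫ w, g w ∂μ) - ∫ w, g w ∂ν| / (c₁ * σ + c₂) ≤ sInf S :=
      le_csInf hne fun r hr => (div_le_iff₀' hc).mpr (key r hr)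
    rw [hW]
    calc |(∫ w, g w ∂μ) - ∫ w, g w ∂ν|
        = (c₁ * σ + c₂) * (|(∫ w, g w ∂μ) - ∫ w, g w ∂ν| / (c₁ * σ + c₂)) := by
          field_simp
      _ ≤ (c₁ * σ + c₂) * sInf S := by
          exact mul_le_mul_of_nonneg_left h1 hc.le
end

section
/- Let π be the Gibbs probability measure on ℝ^d with density p(w) = exp(-βF(w))/Λ, where F is nonnegative, M-smooth with minimizer w* and minimum F*, satisfies F(w) ≥ (m/3)‖w‖² - (b/2)log 3, β ≥ 2/m, and ∫‖w‖² dπ(w) ≤ (b + d/β)/m. Then ∫F dπ - F* ≤ (d/(2β))·log((eM/m)·(bβ/d + 1)). -/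
open Real MeasureTheory
open scoped ENNReal NNReal

lemma gauss_int {d : ℕ} {t : ℝ} (ht : 0 < t) :
    Integrable (fun w : EuclideanSpace ℝ (Fin d) => Real.exp (-t * ‖w‖ ^ 2)) := by
  have h := (GaussianFourier.integrable_cexp_neg_mul_sq_norm_add
    (b := (t : ℂ)) (by simpa using ht) 0 (0 : EuclideanSpace ℝ (Fin d))).norm
  refine h.congr (Filter.Eventually.of_forall fun w => ?_)
  simp [Complex.norm_exp, ← Complex.ofReal_pow, ← Complex.ofReal_mul]

lemma gauss_val {d : ℕ} {t : ℝ} (ht : 0 < t) :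
    ∫ w : EuclideanSpace ℝ (Fin d), Real.exp (-t * ‖w‖ ^ 2) = (π / t) ^ ((d : ℝ) / 2) := by
  rw [GaussianFourier.integral_rexp_neg_mul_sq_norm ht, finrank_euclideanSpace_fin]

lemma integrable_of_le_gauss {d : ℕ} {f : EuclideanSpace ℝ (Fin d) → ℝ} {C t : ℝ}
    (ht : 0 < t) (hf : AEStronglyMeasurable f (volume : Measure (EuclideanSpace ℝ (Fin d))))
    (h : ∀ w, |f w| ≤ C * Real.exp (-t * ‖w‖ ^ 2)) : Integrable f := by
  refine ((gauss_int ht).const_mul C).mono hf (Filter.Eventually.of_forall fun w => ?_)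
  rw [Real.norm_eq_abs]
  exact (h w).trans (le_abs_self _)

lemma mul_exp_neg_le {t x : ℝ} (ht : 0 < t) :
    x * Real.exp (-(t * x)) ≤ Real.exp (-1) / t := by
  have h1 : t * x ≤ Real.exp (t * x - 1) := by
    have := Real.add_one_le_exp (t * x - 1); linarith
  have h2 : x ≤ Real.exp (t * x - 1) / t := by
    rw [le_div_iff₀ ht]; linarith [h1]
  calc x * Real.exp (-(t * x)) ≤ (Real.exp (t * x - 1) / t) * Real.exp (-(t * x)) :=
        mul_le_mul_of_nonneg_right h2 (Real.exp_pos _).le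
    _ = Real.exp (-1) / t := by rw [div_mul_eq_mul_div, ← Real.exp_add]; ring_nf

lemma integral_wd {d : ℕ} (p : EuclideanSpace ℝ (Fin d) → ℝ)
    (hp : Measurable p) (hp0 : ∀ w, 0 ≤ p w) (f : EuclideanSpace ℝ (Fin d) → ℝ) :
    ∫ w, f w ∂(volume.withDensity (fun w => ENNReal.ofReal (p w))) =
      ∫ w, p w * f w := by
  have h1 : (fun w => ENNReal.ofReal (p w)) = fun w => ((fun w => (p w).toNNReal) w : ℝ≥0∞) := rfl
  rw [h1, integral_withDensity_eq_integral_smul (by exact hp.real_toNNReal)]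
  congr 1; ext w
  simp [NNReal.smul_def, Real.coe_toNNReal _ (hp0 w)]

lemma descent {d : ℕ} (F : EuclideanSpace ℝ (Fin d) → ℝ) (M : ℝ)
    (wstar : EuclideanSpace ℝ (Fin d))
    (hF : ContDiff ℝ 1 F)
    (hsmooth : ∀ w v : EuclideanSpace ℝ (Fin d),
      ‖gradient F w - gradient F v‖ ≤ M * ‖w - v‖)
    (hmin : ∀ w, F wstar ≤ F w) (w : EuclideanSpace ℝ (Fin d)) :
    F w ≤ F wstar + M / 2 * ‖w - wstar‖ ^ 2 := by
  have hdiff : Differentiable ℝ F := hF.differentiable one_ne_zero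
  set L : EuclideanSpace ℝ (Fin d) → (EuclideanSpace ℝ (Fin d) →L[ℝ] ℝ) :=
    fun x => fderiv ℝ F x with hL
  have hLlip : ∀ x y, ‖L x - L y‖ ≤ M * ‖x - y‖ := by
    intro x y
    have h : L x - L y =
        (InnerProductSpace.toDual ℝ (EuclideanSpace ℝ (Fin d)))
          (gradient F x - gradient F y) := by
      rw [map_sub]
      simp only [hL, gradient, LinearIsometryEquiv.apply_symm_apply]
    rw [h, LinearIsometryEquiv.norm_map]
    exact hsmooth x y
  have hloc : IsLocalMin F wstar := Filter.Eventually.of_forall hmin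
  have hL0 : L wstar = 0 := hloc.fderiv_eq_zero
  set u : EuclideanSpace ℝ (Fin d) := w - wstar with hu
  set γ : ℝ → EuclideanSpace ℝ (Fin d) := fun t => wstar + t • u with hγ
  have hγd : ∀ t : ℝ, HasDerivAt γ u t := by
    intro t
    simpa [hγ] using ((hasDerivAt_id t).smul_const u).const_add wstar
  have hγc : Continuous γ := by
    exact continuous_const.add (continuous_id.smul continuous_const)
  have hφd : ∀ t : ℝ, HasDerivAt (fun t => F (γ t)) (L (γ t) u) t := fun t =>
    ((hdiff (γ t)).hasFDerivAt).comp_hasDerivAt t (hγd t)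
  have hcont : Continuous fun t : ℝ => L (γ t) u := by
    have hLc : Continuous L := hF.continuous_fderiv one_ne_zero
    exact (hLc.comp hγc).clm_apply continuous_const
  have key : F w - F wstar = ∫ t in (0:ℝ)..1, L (γ t) u := by
    have h := intervalIntegral.integral_eq_sub_of_hasDerivAt
      (f := fun t => F (γ t)) (f' := fun t => L (γ t) u)
      (fun t _ => hφd t) (hcont.intervalIntegrable 0 1)
    rw [h]
    congr 1 <;> simp [hγ, hu]
  have hbound : ∀ t ∈ Set.Icc (0:ℝ) 1, L (γ t) u ≤ M * t * ‖u‖ ^ 2 := by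
    intro t ht
    have h1 : L (γ t) u = (L (γ t) - L wstar) u := by simp [hL0]
    have h2 : ‖(L (γ t) - L wstar) u‖ ≤ ‖L (γ t) - L wstar‖ * ‖u‖ :=
      (L (γ t) - L wstar).le_opNorm u
    have h4 : ‖γ t - wstar‖ = t * ‖u‖ := by
      simp [hγ, norm_smul, abs_of_nonneg ht.1]
    calc L (γ t) u ≤ ‖(L (γ t) - L wstar) u‖ := h1 ▸ (h1 ▸ le_abs_self _)
      _ ≤ (M * (t * ‖u‖)) * ‖u‖ := le_trans h2 (by
          apply mul_le_mul_of_nonneg_right _ (norm_nonneg u)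
          rw [← h4]; exact hLlip _ _)
      _ = M * t * ‖u‖ ^ 2 := by ring
  have hInt : ∫ t in (0:ℝ)..1, L (γ t) u ≤ ∫ t in (0:ℝ)..1, M * t * ‖u‖ ^ 2 := by
    apply intervalIntegral.integral_mono_on zero_le_one
      (hcont.intervalIntegrable 0 1)
      (((continuous_const.mul continuous_id).mul continuous_const).intervalIntegrable 0 1)
    exact hbound
  have hval : ∫ t in (0:ℝ)..1, M * t * ‖u‖ ^ 2 = M / 2 * ‖u‖ ^ 2 := by
    simp_rw [mul_comm M _, mul_assoc]
    rw [intervalIntegral.integral_mul_const, integral_id]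
    ring
  have hfin := key ▸ (hInt.trans hval.le)
  have : F w - F wstar ≤ M / 2 * ‖u‖ ^ 2 := by rw [key]; exact hInt.trans hval.le
  simpa [hu] using by linarith [this]

theorem gibbs_almost_ERM
    {d : ℕ} (F : EuclideanSpace ℝ (Fin d) → ℝ) (M m b β Fstar Λ : ℝ)
    (wstar : EuclideanSpace ℝ (Fin d))
    (πz : Measure (EuclideanSpace ℝ (Fin d)))
    (hM : 0 < M) (hm : 0 < m) (hb : 0 ≤ b) (hβ : β ≥ 2 / m)
    (hβpos : 0 < β)
    (hF : ContDiff ℝ 1 F)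
    (hnonneg : ∀ w, 0 ≤ F w)
    (hsmooth : ∀ w v : EuclideanSpace ℝ (Fin d),
      ‖gradient F w - gradient F v‖ ≤ M * ‖w - v‖)
    (hmin : ∀ w, F wstar ≤ F w)
    (hFstar : F wstar = Fstar)
    (hlower : ∀ w : EuclideanSpace ℝ (Fin d),
      F w ≥ m / 3 * ‖w‖ ^ 2 - b / 2 * Real.log 3)
    (hΛ : Λ = ∫ w : EuclideanSpace ℝ (Fin d), Real.exp (-β * F w))
    (hπ : πz = volume.withDensity
      (fun w => ENNReal.ofReal (Real.exp (-β * F w) / Λ)))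
    (hmoment : ∫ w, ‖w‖ ^ 2 ∂πz ≤ (b + d / β) / m) :
    (∫ w, F w ∂πz) - Fstar ≤
      (d : ℝ) / (2 * β) *
        Real.log (Real.exp 1 * M / m * (b * β / d + 1)) := by
  have ha : (0:ℝ) < β * m / 3 := by positivity
  set a : ℝ := β * m / 3 with ha'
  set c : ℝ := b / 2 * Real.log 3 with hc'
  have hc0 : 0 ≤ c := by
    apply mul_nonneg (by linarith) (Real.log_nonneg (by norm_num))
  set g : EuclideanSpace ℝ (Fin d) → ℝ := fun w => Real.exp (-β * F w) with hg'
  have hgcont : Continuous g := Real.continuous_exp.comp (continuous_const.mul hF.continuous)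
  have hgpos : ∀ w, 0 < g w := fun w => Real.exp_pos _
  have hgle : ∀ w, g w ≤ Real.exp (β * c) * Real.exp (-a * ‖w‖ ^ 2) := by
    intro w
    rw [← Real.exp_add]
    apply Real.exp_le_exp.2
    have := hlower w
    nlinarith [hβpos.le]
  have hg_int : Integrable g := by
    refine integrable_of_le_gauss (C := Real.exp (β * c)) ha hgcont.aestronglyMeasurable fun w => ?_
    rw [abs_of_pos (hgpos w)]
    exact hgle w
  have hΛpos : 0 < Λ := by
    rw [hΛ]
    rw [integral_pos_iff_support_of_nonneg (fun w => (hgpos w).le) hg_int]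
    have : Function.support g = Set.univ := Set.eq_univ_of_forall fun w => (hgpos w).ne'
    rw [this]
    exact IsOpen.measure_pos volume isOpen_univ ⟨0, trivial⟩
  set p : EuclideanSpace ℝ (Fin d) → ℝ := fun w => g w / Λ with hp'
  have hppos : ∀ w, 0 < p w := fun w => div_pos (hgpos w) hΛpos
  have hpcont : Continuous p := hgcont.div_const Λ
  have hp_int : Integrable p := hg_int.div_const Λ
  have hp_one : ∫ w, p w = 1 := by
    rw [hp']
    simp only [integral_div, ← hΛ]
    exact div_self hΛpos.ne'
  have hπ_ap : ∀ f : EuclideanSpace ℝ (Fin d) → ℝ,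
      ∫ w, f w ∂πz = ∫ w, p w * f w := by
    intro f
    rw [hπ]
    exact integral_wd p (hgcont.measurable.div_const Λ) (fun w => (hppos w).le) f
  -- bounds on p * F and p * ‖·‖^2
  have hpF_bd : ∀ w, |p w * F w| ≤
      (Real.exp (-1) / (β / 2) * Real.exp (β / 2 * c) / Λ) * Real.exp (-(a / 2) * ‖w‖ ^ 2) := by
    intro w
    have h1 : F w * Real.exp (-(β / 2 * F w)) ≤ Real.exp (-1) / (β / 2) :=
      mul_exp_neg_le (by positivity)
    have h2 : Real.exp (-(β / 2 * F w)) ≤ Real.exp (β / 2 * c) * Real.exp (-(a / 2) * ‖w‖ ^ 2) := by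
      rw [← Real.exp_add]
      apply Real.exp_le_exp.2
      have := hlower w
      nlinarith [hβpos.le]
    have hsplit : Real.exp (-β * F w) = Real.exp (-(β / 2 * F w)) * Real.exp (-(β / 2 * F w)) := by
      rw [← Real.exp_add]
      congr 1; ring
    rw [abs_of_nonneg (mul_nonneg (hppos w).le (hnonneg w))]
    have heq : p w * F w = (F w * Real.exp (-(β / 2 * F w))) * Real.exp (-(β / 2 * F w)) / Λ := by
      show Real.exp (-β * F w) / Λ * F w = _
      rw [hsplit]; ring
    rw [heq]
    calc (F w * Real.exp (-(β / 2 * F w))) * Real.exp (-(β / 2 * F w)) / Λ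
        ≤ (Real.exp (-1) / (β / 2)) * (Real.exp (β / 2 * c) * Real.exp (-(a / 2) * ‖w‖ ^ 2)) / Λ := by
          gcongr
      _ = (Real.exp (-1) / (β / 2) * Real.exp (β / 2 * c) / Λ) * Real.exp (-(a / 2) * ‖w‖ ^ 2) := by
          ring
  have hpF_int : Integrable (fun w => p w * F w) := by
    refine integrable_of_le_gauss (C := Real.exp (-1) / (β / 2) * Real.exp (β / 2 * c) / Λ)
      (by positivity) ((hpcont.mul hF.continuous).aestronglyMeasurable) hpF_bd
  have hpn_bd : ∀ w : EuclideanSpace ℝ (Fin d), |p w * ‖w‖ ^ 2| ≤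
      (Real.exp (β * c) / Λ * (Real.exp (-1) / (a / 2))) * Real.exp (-(a / 2) * ‖w‖ ^ 2) := by
    intro w
    have h1 : ‖w‖ ^ 2 * Real.exp (-(a / 2 * ‖w‖ ^ 2)) ≤ Real.exp (-1) / (a / 2) :=
      mul_exp_neg_le (by positivity)
    have hsplit : Real.exp (-a * ‖w‖ ^ 2)
        = Real.exp (-(a / 2 * ‖w‖ ^ 2)) * Real.exp (-(a / 2) * ‖w‖ ^ 2) := by
      rw [← Real.exp_add]; congr 1; ring
    rw [abs_of_nonneg (mul_nonneg (hppos w).le (by positivity))]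
    have h2 : p w * ‖w‖ ^ 2 ≤ (Real.exp (β * c) * Real.exp (-a * ‖w‖ ^ 2)) / Λ * ‖w‖ ^ 2 := by
      show g w / Λ * ‖w‖ ^ 2 ≤ _
      gcongr
      exact hgle w
    refine h2.trans ?_
    rw [hsplit]
    calc Real.exp (β * c) * (Real.exp (-(a / 2 * ‖w‖ ^ 2)) * Real.exp (-(a / 2) * ‖w‖ ^ 2)) / Λ
          * ‖w‖ ^ 2
        = (Real.exp (β * c) / Λ) * (‖w‖ ^ 2 * Real.exp (-(a / 2 * ‖w‖ ^ 2)))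
          * Real.exp (-(a / 2) * ‖w‖ ^ 2) := by ring
      _ ≤ (Real.exp (β * c) / Λ) * (Real.exp (-1) / (a / 2)) * Real.exp (-(a / 2) * ‖w‖ ^ 2) := by
          gcongr
      _ = (Real.exp (β * c) / Λ * (Real.exp (-1) / (a / 2))) * Real.exp (-(a / 2) * ‖w‖ ^ 2) := by
          ring
  have hpn_int : Integrable (fun w : EuclideanSpace ℝ (Fin d) => p w * ‖w‖ ^ 2) := by
    refine integrable_of_le_gauss (C := Real.exp (β * c) / Λ * (Real.exp (-1) / (a / 2)))
      (by positivity) ((hpcont.mul (continuous_norm.pow 2)).aestronglyMeasurable) hpn_bd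
  have hπuniv : πz Set.univ = 1 := by
    rw [hπ, withDensity_apply _ MeasurableSet.univ, setLIntegral_univ]
    rw [← ofReal_integral_eq_lintegral_ofReal hp_int
      (Filter.Eventually.of_forall fun w => (hppos w).le)]
    rw [hp_one]
    simp
  by_cases hd : d = 0
  · subst hd
    haveI : Subsingleton (EuclideanSpace ℝ (Fin 0)) :=
      ⟨fun x y => WithLp.ofLp_injective 2 (Subsingleton.elim _ _)⟩
    have hFc : ∀ w, F w = Fstar := fun w => by rw [Subsingleton.elim w wstar, hFstar]
    have : ∫ w, F w ∂πz = Fstar := by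
      rw [show (fun w : EuclideanSpace ℝ (Fin 0) => F w) = fun _ => Fstar from funext hFc]
      rw [integral_const, measureReal_def, hπuniv]
      simp
    rw [this]
    simp
  -- main case d > 0
  have hdpos : (0:ℝ) < d := by exact_mod_cast Nat.pos_of_ne_zero hd
  set s : ℝ := (b + d / β) / (m * d) with hs'
  have hs : 0 < s := by
    apply div_pos _ (by positivity)
    have h : 0 < (d:ℝ) / β := by positivity
    linarith
  have h2πs : 0 < 2 * π * s := by positivity
  set q : EuclideanSpace ℝ (Fin d) → ℝ :=
    fun w => (2 * π * s) ^ (-(d:ℝ) / 2) * Real.exp (-(1 / (2 * s)) * ‖w‖ ^ 2) with hq'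
  have hqpos : ∀ w, 0 < q w := fun w =>
    mul_pos (Real.rpow_pos_of_pos h2πs _) (Real.exp_pos _)
  have hq_int : Integrable q := (gauss_int (by positivity)).const_mul _
  have hq_one : ∫ w, q w = 1 := by
    rw [hq', integral_const_mul, gauss_val (show (0:ℝ) < 1 / (2 * s) by positivity)]
    have harg : π / (1 / (2 * s)) = 2 * π * s := by field_simp
    rw [harg, ← Real.rpow_add h2πs, show -(d:ℝ) / 2 + (d:ℝ) / 2 = 0 by ring,
      Real.rpow_zero]
  set φ : EuclideanSpace ℝ (Fin d) → ℝ := fun w =>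
    β * F w + Real.log Λ - (d:ℝ) / 2 * Real.log (2 * π * s) - 1 / (2 * s) * ‖w‖ ^ 2 with hφ'
  have hφ_eq : ∀ w, φ w = Real.log (q w / p w) := by
    intro w
    rw [Real.log_div (hqpos w).ne' (hppos w).ne']
    have hlq : Real.log (q w) = (-(d:ℝ) / 2) * Real.log (2 * π * s)
        - 1 / (2 * s) * ‖w‖ ^ 2 := by
      show Real.log ((2 * π * s) ^ (-(d:ℝ) / 2) * Real.exp (-(1 / (2 * s)) * ‖w‖ ^ 2)) = _
      rw [Real.log_mul (Real.rpow_pos_of_pos h2πs _).ne' (Real.exp_pos _).ne',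
        Real.log_rpow h2πs, Real.log_exp]
      ring
    have hlp : Real.log (p w) = -β * F w - Real.log Λ := by
      show Real.log (Real.exp (-β * F w) / Λ) = _
      rw [Real.log_div (Real.exp_pos _).ne' hΛpos.ne', Real.log_exp]
    rw [hlq, hlp, hφ']
    ring
  have hpt : ∀ w, p w * φ w ≤ q w - p w := by
    intro w
    rw [hφ_eq]
    have h := Real.log_le_sub_one_of_pos (div_pos (hqpos w) (hppos w))
    have hp0 := hppos w
    calc p w * Real.log (q w / p w) ≤ p w * (q w / p w - 1) :=
          mul_le_mul_of_nonneg_left h hp0.le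
      _ = q w - p w := by field_simp
  have hrw : (fun w => p w * φ w) = fun w =>
      β * (p w * F w) + (Real.log Λ - (d:ℝ) / 2 * Real.log (2 * π * s)) * p w
        - 1 / (2 * s) * (p w * ‖w‖ ^ 2) := by
    funext w; rw [hφ']; ring
  have hφ_int : Integrable (fun w => p w * φ w) := by
    rw [hrw]
    exact ((hpF_int.const_mul β).add (hp_int.const_mul _)).sub (hpn_int.const_mul _)
  have hGibbs : ∫ w, p w * φ w ≤ 0 := by
    have h1 : ∫ w, p w * φ w ≤ ∫ w, (q w - p w) :=
      integral_mono hφ_int (hq_int.sub hp_int) hpt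
    rw [integral_sub hq_int hp_int, hq_one, hp_one] at h1
    linarith
  set I : ℝ := ∫ w, p w * F w with hI'
  set S : ℝ := ∫ w, p w * ‖w‖ ^ 2 with hS'
  have hexp : ∫ w, p w * φ w =
      β * I + (Real.log Λ - (d:ℝ) / 2 * Real.log (2 * π * s)) - 1 / (2 * s) * S := by
    have hintA : Integrable (fun w => β * (p w * F w)) volume := hpF_int.const_mul β
    have hintB : Integrable (fun w =>
        (Real.log Λ - (d:ℝ) / 2 * Real.log (2 * π * s)) * p w) volume := hp_int.const_mul _
    have hintC : Integrable (fun w => 1 / (2 * s) * (p w * ‖w‖ ^ 2)) volume :=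
      hpn_int.const_mul _
    have hintAB : Integrable (fun w => β * (p w * F w) +
        (Real.log Λ - (d:ℝ) / 2 * Real.log (2 * π * s)) * p w) volume := hintA.add hintB
    rw [hrw, integral_sub hintAB hintC, integral_add hintA hintB,
      integral_const_mul, integral_const_mul, integral_const_mul, hp_one, hI', hS']
    ring
  have key1 : β * I + Real.log Λ - (d:ℝ) / 2 * Real.log (2 * π * s)
      - 1 / (2 * s) * S ≤ 0 := by
    rw [hexp] at hGibbs; linarith
  -- moment bound
  have hSle : S ≤ s * d := by
    have h := hmoment
    rw [hπ_ap (fun w => ‖w‖ ^ 2)] at h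
    have he : (b + d / β) / m = s * d := by
      rw [hs']; field_simp
    rw [he] at h
    exact h
  have hSbd : 1 / (2 * s) * S ≤ (d:ℝ) / 2 := by
    have h1 : 1 / (2 * s) * S ≤ 1 / (2 * s) * (s * d) := by
      apply mul_le_mul_of_nonneg_left hSle (by positivity)
    have h2 : 1 / (2 * s) * (s * d) = (d:ℝ) / 2 := by field_simp
    linarith
  -- lower bound on Λ
  have hdesc : ∀ w, F w ≤ Fstar + M / 2 * ‖w - wstar‖ ^ 2 := fun w =>
    hFstar ▸ descent F M wstar hF hsmooth hmin w
  have hβM : (0:ℝ) < β * M / 2 := by positivity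
  have hlow_int : Integrable (fun w : EuclideanSpace ℝ (Fin d) =>
      Real.exp (-β * Fstar) * Real.exp (-(β * M / 2) * ‖w - wstar‖ ^ 2)) := by
    exact ((gauss_int hβM).const_mul (Real.exp (-β * Fstar))).comp_sub_right wstar
  have hptle : ∀ w, Real.exp (-β * Fstar) * Real.exp (-(β * M / 2) * ‖w - wstar‖ ^ 2) ≤ g w := by
    intro w
    rw [← Real.exp_add]
    apply Real.exp_le_exp.2
    have h := mul_le_mul_of_nonneg_left (hdesc w) hβpos.le
    have h2 : β * (Fstar + M / 2 * ‖w - wstar‖ ^ 2)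
        = β * Fstar + β * M / 2 * ‖w - wstar‖ ^ 2 := by ring
    linarith only [h, h2]
  have h2πβM : (0:ℝ) < 2 * π / (β * M) := by positivity
  have hΛge : Real.exp (-β * Fstar) * (2 * π / (β * M)) ^ ((d:ℝ) / 2) ≤ Λ := by
    rw [hΛ]
    have h1 : (∫ w : EuclideanSpace ℝ (Fin d),
        Real.exp (-β * Fstar) * Real.exp (-(β * M / 2) * ‖w - wstar‖ ^ 2)) ≤ ∫ w, g w :=
      integral_mono hlow_int hg_int hptle
    have h2 : (∫ w : EuclideanSpace ℝ (Fin d),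
        Real.exp (-β * Fstar) * Real.exp (-(β * M / 2) * ‖w - wstar‖ ^ 2))
        = Real.exp (-β * Fstar) * (2 * π / (β * M)) ^ ((d:ℝ) / 2) := by
      rw [integral_const_mul]
      rw [integral_sub_right_eq_self
        (fun w : EuclideanSpace ℝ (Fin d) => Real.exp (-(β * M / 2) * ‖w‖ ^ 2)) wstar]
      rw [gauss_val hβM]
      congr 2
      field_simp
    rw [← h2]
    exact h1
  have hlogΛ : -β * Fstar + (d:ℝ) / 2 * Real.log (2 * π / (β * M)) ≤ Real.log Λ := by
    have h1 : Real.log (Real.exp (-β * Fstar) * (2 * π / (β * M)) ^ ((d:ℝ) / 2)) ≤ Real.log Λ :=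
      Real.log_le_log (by positivity) hΛge
    rw [Real.log_mul (Real.exp_pos _).ne' (Real.rpow_pos_of_pos h2πβM _).ne',
      Real.log_exp, Real.log_rpow h2πβM] at h1
    linarith
  -- final assembly
  have e1 : Real.log (Real.exp 1 * M / m * (b * β / d + 1)) =
      Real.log (2 * π * s) - Real.log (2 * π / (β * M)) + 1 := by
    have harg : Real.exp 1 * M / m * (b * β / d + 1) =
        Real.exp 1 * ((2 * π * s) / (2 * π / (β * M))) := by
      rw [hs']
      have hπ0 : π ≠ 0 := Real.pi_ne_zero
      field_simp
    rw [harg, Real.log_mul (Real.exp_pos _).ne' (by positivity),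
      Real.log_div h2πs.ne' h2πβM.ne', Real.log_exp]
    ring
  have hfinal : β * (I - Fstar) ≤
      (d:ℝ) / 2 * Real.log (Real.exp 1 * M / m * (b * β / d + 1)) := by
    rw [e1]
    linarith only [key1, hSbd, hlogΛ]
  rw [hπ_ap F, ← hI']
  rw [show (d:ℝ) / (2 * β) * Real.log (Real.exp 1 * M / m * (b * β / d + 1))
    = ((d:ℝ) / 2 * Real.log (Real.exp 1 * M / m * (b * β / d + 1))) / β by
      field_simp]
  rw [le_div_iff₀ hβpos]
  linarith only [hfinal]
end

section
/- Let μ₀ be a probability measure on ℝ^d with bounded density p₀ and κ₀ := log∫exp(‖w‖²) p₀(w) dw < ∞, and let π be the Gibbs measure with density exp(-βF(w))/Λ, where F is nonnegative, satisfies F(w) ≤ (M/3)‖w‖² + B‖w‖ + A and F(w) ≥ (m/3)‖w‖² - (b/2)log 3 for all w. Then D(μ₀‖π) ≤ log‖p₀‖_∞ + (d/2)·log(3π/(mβ)) + β·((M/3)κ₀ + B·√κ₀ + A + (b/2)·log 3), where D denotes relative entropy (Kullback–Leibler divergence). -/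
open Real MeasureTheory

lemma integrable_gauss {d : ℕ} {c : ℝ} (hc : 0 < c) :
    Integrable (fun w : EuclideanSpace ℝ (Fin d) => Real.exp (-c * ‖w‖ ^ 2)) := by
  have h := (GaussianFourier.integrable_cexp_neg_mul_sq_norm_add
    (b := (c : ℂ)) (by simpa using hc) 0 (0 : EuclideanSpace ℝ (Fin d))).norm
  have heq : ∀ w : EuclideanSpace ℝ (Fin d),
      ‖Complex.exp (-(c : ℂ) * (‖w‖ : ℂ) ^ 2 + 0 * (inner ℝ (0 : EuclideanSpace ℝ (Fin d)) w : ℝ))‖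
        = Real.exp (-c * ‖w‖ ^ 2) := by
    intro w
    rw [Complex.norm_exp]
    have : (-(c : ℂ) * (‖w‖ : ℂ) ^ 2 + 0 * ((inner ℝ (0 : EuclideanSpace ℝ (Fin d)) w : ℝ) : ℂ))
        = ((-c * ‖w‖ ^ 2 : ℝ) : ℂ) := by push_cast; ring
    rw [this, Complex.ofReal_re]
  exact h.congr (Filter.Eventually.of_forall heq)

lemma integral_gauss {d : ℕ} {c : ℝ} (hc : 0 < c) :
    ∫ w : EuclideanSpace ℝ (Fin d), Real.exp (-c * ‖w‖ ^ 2) = (π / c) ^ ((d : ℝ) / 2) := by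
  rw [GaussianFourier.integral_rexp_neg_mul_sq_norm hc, finrank_euclideanSpace_fin]

lemma neg_mul_log_le (x t : ℝ) (hx : 0 ≤ x) :
    -(x * Real.log x) ≤ x * t + Real.exp (-t - 1) := by
  rcases eq_or_lt_of_le hx with h | h
  · rw [← h]
    simp
    positivity
  · have h1 := Real.add_one_le_exp (-t - 1 - Real.log x)
    have h2 : Real.exp (-t - 1 - Real.log x) = Real.exp (-t - 1) / x := by
      rw [Real.exp_sub, Real.exp_log h]
    rw [h2] at h1
    have h3 : x * (-t - Real.log x) ≤ Real.exp (-t - 1) := by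
      have := (le_div_iff₀ h).mp (by linarith : -t - Real.log x ≤ Real.exp (-t - 1) / x)
      linarith [this]
    nlinarith

set_option maxHeartbeats 1000000 in
theorem relative_entropy_initial_bound
    {d : ℕ} (p₀ F : EuclideanSpace ℝ (Fin d) → ℝ)
    (A B M m b β Λ Pinf κ₀ : ℝ)
    (hA : 0 ≤ A) (hB : 0 ≤ B) (hM : 0 < M) (hm : 0 < m) (hb : 0 ≤ b)
    (hβ : 0 < β)
    (hp₀meas : Measurable p₀)
    (hp₀pos : ∀ w, 0 ≤ p₀ w)
    (hp₀prob : ∫ w : EuclideanSpace ℝ (Fin d), p₀ w = 1)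
    (hp₀bdd : ∀ w, p₀ w ≤ Pinf) (hPinf : 0 < Pinf)
    (hκ₀int : Integrable
      (fun w : EuclideanSpace ℝ (Fin d) => Real.exp (‖w‖ ^ 2) * p₀ w))
    (hκ₀ : κ₀ = Real.log
      (∫ w : EuclideanSpace ℝ (Fin d), Real.exp (‖w‖ ^ 2) * p₀ w))
    (hFmeas : Measurable F)
    (hFnonneg : ∀ w, 0 ≤ F w)
    (hFupper : ∀ w : EuclideanSpace ℝ (Fin d),
      F w ≤ M / 3 * ‖w‖ ^ 2 + B * ‖w‖ + A)
    (hFlower : ∀ w : EuclideanSpace ℝ (Fin d),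
      F w ≥ m / 3 * ‖w‖ ^ 2 - b / 2 * Real.log 3)
    (hΛ : Λ = ∫ w : EuclideanSpace ℝ (Fin d), Real.exp (-β * F w)) :
    (∫ w : EuclideanSpace ℝ (Fin d),
        p₀ w * Real.log (p₀ w / (Real.exp (-β * F w) / Λ))) ≤
      Real.log Pinf + (d : ℝ) / 2 * Real.log (3 * Real.pi / (m * β)) +
        β * (M / 3 * κ₀ + B * Real.sqrt κ₀ + A + b / 2 * Real.log 3) := by
  -- p₀ is integrable
  have hp₀int : Integrable p₀ := by
    by_contra h
    rw [integral_undef h] at hp₀prob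
    norm_num at hp₀prob
  -- exponential moment
  set I : ℝ := ∫ w : EuclideanSpace ℝ (Fin d), Real.exp (‖w‖ ^ 2) * p₀ w with hIdef
  have hexp1 : ∀ w : EuclideanSpace ℝ (Fin d), (1 : ℝ) ≤ Real.exp (‖w‖ ^ 2) := by
    intro w
    rw [← Real.exp_zero]
    exact Real.exp_le_exp.2 (by positivity)
  have hI_ge : (1 : ℝ) ≤ I := by
    rw [← hp₀prob]
    exact integral_mono hp₀int hκ₀int
      (fun w => le_mul_of_one_le_left (hp₀pos w) (hexp1 w))
  have hIpos : 0 < I := lt_of_lt_of_le one_pos hI_ge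
  have hexpκ : Real.exp κ₀ = I := by rw [hκ₀, Real.exp_log hIpos]
  have hκnonneg : 0 ≤ κ₀ := by rw [hκ₀]; exact Real.log_nonneg hI_ge
  -- integrability of ‖w‖²·p₀ and ‖w‖·p₀
  have hsq_meas : Measurable fun w : EuclideanSpace ℝ (Fin d) => ‖w‖ ^ 2 * p₀ w :=
    ((measurable_norm.pow_const 2).mul hp₀meas)
  have hsq_int : Integrable (fun w : EuclideanSpace ℝ (Fin d) => ‖w‖ ^ 2 * p₀ w) := by
    refine hκ₀int.mono' hsq_meas.aestronglyMeasurable (Filter.Eventually.of_forall fun w => ?_)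
    have h1 : ‖w‖ ^ 2 ≤ Real.exp (‖w‖ ^ 2) := by
      linarith [Real.add_one_le_exp (‖w‖ ^ 2)]
    rw [Real.norm_eq_abs, abs_of_nonneg (mul_nonneg (by positivity) (hp₀pos w))]
    exact mul_le_mul_of_nonneg_right h1 (hp₀pos w)
  have hsq_le : (∫ w : EuclideanSpace ℝ (Fin d), ‖w‖ ^ 2 * p₀ w) ≤ κ₀ := by
    have key : ∀ w : EuclideanSpace ℝ (Fin d), ‖w‖ ^ 2 * p₀ w ≤
        (κ₀ - 1) * p₀ w + Real.exp (-κ₀) * (Real.exp (‖w‖ ^ 2) * p₀ w) := by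
      intro w
      have h1 := Real.add_one_le_exp (‖w‖ ^ 2 - κ₀)
      have h2 : Real.exp (‖w‖ ^ 2 - κ₀) = Real.exp (-κ₀) * Real.exp (‖w‖ ^ 2) := by
        rw [← Real.exp_add]; ring_nf
      rw [h2] at h1
      nlinarith [hp₀pos w]
    have hcomb1 : Integrable (fun w : EuclideanSpace ℝ (Fin d) =>
        (κ₀ - 1) * p₀ w + Real.exp (-κ₀) * (Real.exp (‖w‖ ^ 2) * p₀ w)) :=
      (hp₀int.const_mul (κ₀ - 1)).add (hκ₀int.const_mul (Real.exp (-κ₀)))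
    have h3 := integral_mono hsq_int hcomb1 key
    rw [integral_add (hp₀int.const_mul (κ₀ - 1)) (hκ₀int.const_mul (Real.exp (-κ₀))),
      integral_const_mul, integral_const_mul, hp₀prob, ← hIdef, ← hexpκ,
      ← Real.exp_add] at h3
    simpa using h3
  have hnorm_meas : Measurable fun w : EuclideanSpace ℝ (Fin d) => ‖w‖ * p₀ w :=
    measurable_norm.mul hp₀meas
  have hnorm_int : Integrable (fun w : EuclideanSpace ℝ (Fin d) => ‖w‖ * p₀ w) := by
    have hcomb2 : Integrable (fun w : EuclideanSpace ℝ (Fin d) => p₀ w + ‖w‖ ^ 2 * p₀ w) :=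
      hp₀int.add hsq_int
    refine hcomb2.mono' hnorm_meas.aestronglyMeasurable
      (Filter.Eventually.of_forall fun w => ?_)
    rw [Real.norm_eq_abs, abs_of_nonneg (mul_nonneg (norm_nonneg w) (hp₀pos w))]
    have h1 : ‖w‖ ≤ 1 + ‖w‖ ^ 2 := by nlinarith [norm_nonneg w]
    nlinarith [hp₀pos w]
  have hnorm_gen : ∀ ε : ℝ, 0 < ε →
      (∫ w : EuclideanSpace ℝ (Fin d), ‖w‖ * p₀ w) ≤ κ₀ / (2 * ε) + ε / 2 := by
    intro ε hε
    have key : ∀ w : EuclideanSpace ℝ (Fin d), ‖w‖ * p₀ w ≤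
        (1 / (2 * ε)) * (‖w‖ ^ 2 * p₀ w) + (ε / 2) * p₀ w := by
      intro w
      have h1 : ‖w‖ ≤ (1 / (2 * ε)) * ‖w‖ ^ 2 + ε / 2 := by
        rw [← sub_nonneg]
        have h2 : (1 / (2 * ε)) * ‖w‖ ^ 2 + ε / 2 - ‖w‖ = (‖w‖ - ε) ^ 2 / (2 * ε) := by
          field_simp; ring
        rw [h2]
        positivity
      nlinarith [hp₀pos w]
    have hcomb3 : Integrable (fun w : EuclideanSpace ℝ (Fin d) =>
        (1 / (2 * ε)) * (‖w‖ ^ 2 * p₀ w) + (ε / 2) * p₀ w) :=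
      (hsq_int.const_mul (1 / (2 * ε))).add (hp₀int.const_mul (ε / 2))
    have h3 := integral_mono hnorm_int hcomb3 key
    rw [integral_add (hsq_int.const_mul (1 / (2 * ε))) (hp₀int.const_mul (ε / 2)),
      integral_const_mul, integral_const_mul, hp₀prob] at h3
    have h4 : (1 / (2 * ε)) * (∫ w : EuclideanSpace ℝ (Fin d), ‖w‖ ^ 2 * p₀ w)
        ≤ (1 / (2 * ε)) * κ₀ := mul_le_mul_of_nonneg_left hsq_le (by positivity)
    calc (∫ w : EuclideanSpace ℝ (Fin d), ‖w‖ * p₀ w)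
        ≤ (1 / (2 * ε)) * (∫ w : EuclideanSpace ℝ (Fin d), ‖w‖ ^ 2 * p₀ w) + (ε / 2) * 1 := h3
      _ ≤ (1 / (2 * ε)) * κ₀ + ε / 2 := by linarith
      _ = κ₀ / (2 * ε) + ε / 2 := by ring
  have hnorm_le : (∫ w : EuclideanSpace ℝ (Fin d), ‖w‖ * p₀ w) ≤ Real.sqrt κ₀ := by
    rcases eq_or_lt_of_le hκnonneg with h | h
    · rw [← h, Real.sqrt_zero]
      refine le_of_forall_pos_le_add fun ε hε => ?_
      have h5 := hnorm_gen ε hε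
      rw [← h, zero_div] at h5
      linarith
    · have hs : 0 < Real.sqrt κ₀ := Real.sqrt_pos.2 h
      have h5 := hnorm_gen (Real.sqrt κ₀) hs
      have heq : κ₀ / (2 * Real.sqrt κ₀) = Real.sqrt κ₀ / 2 := by
        rw [div_eq_div_iff (by positivity) (by norm_num : (2:ℝ) ≠ 0)]
        nlinarith [Real.mul_self_sqrt hκnonneg]
      linarith
  -- F·p₀ integrable and its integral bound
  have hcomb_int : Integrable (fun w : EuclideanSpace ℝ (Fin d) =>
      M / 3 * (‖w‖ ^ 2 * p₀ w) + B * (‖w‖ * p₀ w) + A * p₀ w) :=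
    ((hsq_int.const_mul (M / 3)).add (hnorm_int.const_mul B)).add (hp₀int.const_mul A)
  have hFp₀meas : Measurable fun w : EuclideanSpace ℝ (Fin d) => F w * p₀ w :=
    hFmeas.mul hp₀meas
  have hFp₀int : Integrable (fun w : EuclideanSpace ℝ (Fin d) => F w * p₀ w) := by
    refine hcomb_int.mono' hFp₀meas.aestronglyMeasurable
      (Filter.Eventually.of_forall fun w => ?_)
    rw [Real.norm_eq_abs, abs_of_nonneg (mul_nonneg (hFnonneg w) (hp₀pos w))]
    nlinarith [hFupper w, hp₀pos w]
  have hFp₀_le : (∫ w : EuclideanSpace ℝ (Fin d), F w * p₀ w)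
      ≤ M / 3 * κ₀ + B * Real.sqrt κ₀ + A := by
    have hcomb4 : Integrable (fun w : EuclideanSpace ℝ (Fin d) =>
        M / 3 * (‖w‖ ^ 2 * p₀ w) + B * (‖w‖ * p₀ w)) :=
      (hsq_int.const_mul (M / 3)).add (hnorm_int.const_mul B)
    have h3 := integral_mono hFp₀int hcomb_int
      (fun w => by nlinarith [hFupper w, hp₀pos w])
    rw [integral_add hcomb4 (hp₀int.const_mul A),
      integral_add (hsq_int.const_mul (M / 3)) (hnorm_int.const_mul B),
      integral_const_mul, integral_const_mul, integral_const_mul, hp₀prob] at h3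
    have h4 : M / 3 * (∫ w : EuclideanSpace ℝ (Fin d), ‖w‖ ^ 2 * p₀ w) ≤ M / 3 * κ₀ :=
      mul_le_mul_of_nonneg_left hsq_le (by positivity)
    have h5 : B * (∫ w : EuclideanSpace ℝ (Fin d), ‖w‖ * p₀ w) ≤ B * Real.sqrt κ₀ :=
      mul_le_mul_of_nonneg_left hnorm_le hB
    linarith
  -- the partition function
  set c : ℝ := m * β / 3 with hcdef
  have hc : 0 < c := by positivity
  have hGint : Integrable (fun w : EuclideanSpace ℝ (Fin d) => Real.exp (-c * ‖w‖ ^ 2)) :=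
    integrable_gauss hc
  have hΛbound : ∀ w : EuclideanSpace ℝ (Fin d), Real.exp (-β * F w) ≤
      Real.exp (β * (b / 2) * Real.log 3) * Real.exp (-c * ‖w‖ ^ 2) := by
    intro w
    rw [← Real.exp_add]
    apply Real.exp_le_exp.2
    have := hFlower w
    rw [hcdef]
    nlinarith
  have hΛmeas : Measurable fun w : EuclideanSpace ℝ (Fin d) => Real.exp (-β * F w) :=
    (Real.measurable_exp.comp (hFmeas.const_mul (-β)))
  have hΛint : Integrable (fun w : EuclideanSpace ℝ (Fin d) => Real.exp (-β * F w)) := by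
    refine (hGint.const_mul (Real.exp (β * (b / 2) * Real.log 3))).mono'
      hΛmeas.aestronglyMeasurable (Filter.Eventually.of_forall fun w => ?_)
    rw [Real.norm_eq_abs, abs_of_nonneg (Real.exp_pos _).le]
    exact hΛbound w
  have hΛpos : 0 < Λ := by
    rw [hΛ]
    rw [integral_pos_iff_support_of_nonneg (fun w => (Real.exp_pos _).le) hΛint]
    have : Function.support (fun w : EuclideanSpace ℝ (Fin d) => Real.exp (-β * F w))
        = Set.univ := by
      ext w; simp [Function.support, Real.exp_ne_zero]
    rw [this]
    exact isOpen_univ.measure_pos volume Set.univ_nonempty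
  have hΛle : Λ ≤ Real.exp (β * (b / 2) * Real.log 3) * (π / c) ^ ((d : ℝ) / 2) := by
    rw [hΛ, ← integral_gauss hc, ← integral_const_mul]
    exact integral_mono hΛint (hGint.const_mul _) hΛbound
  have hπc : π / c = 3 * π / (m * β) := by
    rw [hcdef]; field_simp
  have hlogΛ : Real.log Λ ≤ (d : ℝ) / 2 * Real.log (3 * π / (m * β))
      + β * (b / 2) * Real.log 3 := by
    have hrpos : (0 : ℝ) < π / c := by positivity
    have h1 := Real.log_le_log hΛpos hΛle
    rw [Real.log_mul (Real.exp_ne_zero _) (by positivity), Real.log_exp,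
      Real.log_rpow hrpos, hπc] at h1
    linarith
  -- entropy part
  have hplogp_meas : Measurable fun w : EuclideanSpace ℝ (Fin d) => p₀ w * Real.log (p₀ w) :=
    hp₀meas.mul (Real.measurable_log.comp hp₀meas)
  have hG1int : Integrable (fun w : EuclideanSpace ℝ (Fin d) =>
      Real.exp (-(1:ℝ) * ‖w‖ ^ 2)) := integrable_gauss one_pos
  have hdom_int : Integrable (fun w : EuclideanSpace ℝ (Fin d) =>
      |Real.log Pinf| * p₀ w + (‖w‖ ^ 2 * p₀ w + Real.exp (-1 : ℝ) * Real.exp (-(1:ℝ) * ‖w‖ ^ 2))) :=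
    (hp₀int.const_mul _).add (hsq_int.add (hG1int.const_mul _))
  have hup : ∀ w : EuclideanSpace ℝ (Fin d), p₀ w * Real.log (p₀ w) ≤ p₀ w * Real.log Pinf := by
    intro w
    rcases eq_or_lt_of_le (hp₀pos w) with h | h
    · rw [← h]; simp
    · exact mul_le_mul_of_nonneg_left (Real.log_le_log h (hp₀bdd w)) (hp₀pos w)
  have hlow : ∀ w : EuclideanSpace ℝ (Fin d),
      -(p₀ w * Real.log (p₀ w)) ≤ ‖w‖ ^ 2 * p₀ w + Real.exp (-1 : ℝ) * Real.exp (-(1:ℝ) * ‖w‖ ^ 2) := by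
    intro w
    have := neg_mul_log_le (p₀ w) (‖w‖ ^ 2) (hp₀pos w)
    have h2 : Real.exp (-‖w‖ ^ 2 - 1) = Real.exp (-1 : ℝ) * Real.exp (-(1:ℝ) * ‖w‖ ^ 2) := by
      rw [← Real.exp_add]; ring_nf
    nlinarith [this, h2]
  have hplogp_int : Integrable (fun w : EuclideanSpace ℝ (Fin d) => p₀ w * Real.log (p₀ w)) := by
    refine hdom_int.mono' hplogp_meas.aestronglyMeasurable
      (Filter.Eventually.of_forall fun w => ?_)
    rw [Real.norm_eq_abs, abs_le]
    constructor
    · have := hlow w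
      linarith [mul_nonneg (abs_nonneg (Real.log Pinf)) (hp₀pos w)]
    · have h1 := hup w
      have h2 : p₀ w * Real.log Pinf ≤ |Real.log Pinf| * p₀ w := by
        rw [mul_comm]
        exact mul_le_mul_of_nonneg_right (le_abs_self _) (hp₀pos w)
      have h3 : 0 ≤ ‖w‖ ^ 2 * p₀ w + Real.exp (-1 : ℝ) * Real.exp (-(1:ℝ) * ‖w‖ ^ 2) :=
        add_nonneg (mul_nonneg (by positivity) (hp₀pos w)) (by positivity)
      linarith
  have hplogp_le : (∫ w : EuclideanSpace ℝ (Fin d), p₀ w * Real.log (p₀ w))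
      ≤ Real.log Pinf := by
    have h3 := integral_mono hplogp_int (hp₀int.mul_const (Real.log Pinf)) hup
    rwa [integral_mul_const, hp₀prob, one_mul] at h3
  -- decomposition
  have hdecomp : (fun w : EuclideanSpace ℝ (Fin d) =>
      p₀ w * Real.log (p₀ w / (Real.exp (-β * F w) / Λ)))
      = fun w => p₀ w * Real.log (p₀ w) + β * (F w * p₀ w) + Real.log Λ * p₀ w := by
    funext w
    rcases eq_or_lt_of_le (hp₀pos w) with h | h
    · rw [← h]; ring
    · have hd : Real.exp (-β * F w) / Λ ≠ 0 :=
        div_ne_zero (Real.exp_ne_zero _) (ne_of_gt hΛpos)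
      rw [Real.log_div (ne_of_gt h) hd,
        Real.log_div (Real.exp_ne_zero _) (ne_of_gt hΛpos), Real.log_exp]
      ring
  have hsum1 : Integrable (fun w : EuclideanSpace ℝ (Fin d) =>
      p₀ w * Real.log (p₀ w) + β * (F w * p₀ w)) := hplogp_int.add (hFp₀int.const_mul β)
  rw [hdecomp, integral_add hsum1 (hp₀int.const_mul (Real.log Λ)),
    integral_add hplogp_int (hFp₀int.const_mul β), integral_const_mul, integral_const_mul,
    hp₀prob, mul_one]
  have h6 : β * (∫ w : EuclideanSpace ℝ (Fin d), F w * p₀ w)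
      ≤ β * (M / 3 * κ₀ + B * Real.sqrt κ₀ + A) :=
    mul_le_mul_of_nonneg_left hFp₀_le hβ.le
  nlinarith [hplogp_le, hlogΛ, h6]
end
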